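/- Let G ⊆ K{X}° be a set such that for every N ≥ 0 the reductions ρ(G_{≤N}) form a Gröbner basis of Ī_N in k[X], where G_{≤N} = {g ∈ G : val(g) ≤ N}. Then G is a Gröbner basis of I with respect to the valuation-first term order on K{X}°. -/

import Mathlib

open MvPowerSeries

namespace TateStmt

variable {n : ℕ} {O : Type*} [CommRing O]

/-- The Tate condition: the (π-adic) valuations of the coefficients tend to infinity. -/
def IsTate (π : O) (f : MvPowerSeries (Fin n) O) : Prop :=
  ∀ N : ℕ, {i : Fin n →₀ ℕ | ¬ π ^ N ∣ MvPowerSeries.coeff i f}.Finite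

/-- The integral Tate algebra `K{X}°`, as a subring of the ring of formal power series
over the valuation ring `O = K°`. -/
def TateAlgebra (n : ℕ) (O : Type*) [CommRing O] (π : O) :
    Subring (MvPowerSeries (Fin n) O) where
  carrier := {f | IsTate π f}
  zero_mem' := by
    intro N
    apply Set.Finite.subset (Set.finite_empty)
    intro i hi
    exact hi (Dvd.intro 0 (by simp))
  one_mem' := by
    intro N
    apply Set.Finite.subset (Set.finite_singleton (0 : Fin n →₀ ℕ))
    intro i hi
    by_contra h
    rw [Set.mem_singleton_iff] at h
    apply hi
    rw [MvPowerSeries.coeff_one, if_neg h]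
    exact Dvd.intro 0 (by simp)
  add_mem' := by
    intro f g hf hg N
    apply Set.Finite.subset ((hf N).union (hg N))
    intro i hi
    by_contra h
    simp only [Set.mem_union, Set.mem_setOf_eq, not_or, not_not] at h
    exact hi (by rw [map_add]; exact dvd_add h.1 h.2)
  neg_mem' := by
    intro f hf N
    apply Set.Finite.subset (hf N)
    intro i hi
    by_contra h
    simp only [Set.mem_setOf_eq, not_not] at h
    exact hi (by rw [map_neg]; exact (dvd_neg).mpr h)
  mul_mem' := by
    intro f g hf hg N
    apply Set.Finite.subset (Set.Finite.add (hf N) (hg N))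
    intro i hi
    by_contra h
    apply hi
    rw [MvPowerSeries.coeff_mul]
    apply Finset.dvd_sum
    intro p hp
    rw [Finset.HasAntidiagonal.mem_antidiagonal] at hp
    by_cases h1 : π ^ N ∣ MvPowerSeries.coeff p.1 f
    · exact Dvd.dvd.mul_right h1 _
    · by_cases h2 : π ^ N ∣ MvPowerSeries.coeff p.2 g
      · exact Dvd.dvd.mul_left h2 _
      · exact absurd (hp ▸ Set.add_mem_add h1 h2) h

/-- Tate monomials `π^a X^i`, identified with pairs `(a, i) ∈ ℕ × ℕ^n`. -/
abbrev TMon (n : ℕ) := ℕ × (Fin n →₀ ℕ)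

noncomputable def monMul (a b : TMon n) : TMon n := (a.1 + b.1, a.2 + b.2)
def monDvd (a b : TMon n) : Prop := a.1 ≤ b.1 ∧ a.2 ≤ b.2
noncomputable def monDiv (a b : TMon n) : TMon n := (a.1 - b.1, a.2 - b.2)
noncomputable def monLcm (a b : TMon n) : TMon n := (max a.1 b.1, a.2 ⊔ b.2)

/-- The valuation-first term order: compare valuations first (a *smaller* valuation gives a
*larger* term), then exponents via the monomial order `mo`. -/
def termLT (mo : MonomialOrder (Fin n)) (a b : TMon n) : Prop :=
  b.1 < a.1 ∨ (a.1 = b.1 ∧ mo.toSyn a.2 < mo.toSyn b.2)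

def termLE (mo : MonomialOrder (Fin n)) (a b : TMon n) : Prop :=
  a = b ∨ termLT mo a b

/-- Order on `Option (TMon n)`, where `none` (the "monomial" of `0`) is smallest. -/
def optLT (mo : MonomialOrder (Fin n)) : Option (TMon n) → Option (TMon n) → Prop
  | none, none => False
  | none, some _ => True
  | some _, none => False
  | some a, some b => termLT mo a b

def optLE (mo : MonomialOrder (Fin n)) (a b : Option (TMon n)) : Prop :=
  a = b ∨ optLT mo a b

noncomputable def optMul (t : TMon n) : Option (TMon n) → Option (TMon n)
  | none => none
  | some a => some (monMul t a)

/-- `(a, i)` is (the monomial of) a term of `f`: the coefficient of `X^i` has valuation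
exactly `a`. -/
def IsTerm (π : O) (f : MvPowerSeries (Fin n) O) (m : TMon n) : Prop :=
  π ^ m.1 ∣ MvPowerSeries.coeff m.2 f ∧ ¬ π ^ (m.1 + 1) ∣ MvPowerSeries.coeff m.2 f

/-- `m` is the leading monomial of `f`. -/
def IsLM (π : O) (mo : MonomialOrder (Fin n)) (f : MvPowerSeries (Fin n) O) (m : TMon n) :
    Prop :=
  IsTerm π f m ∧ ∀ m', IsTerm π f m' → termLE mo m' m

/-- `s` is the leading monomial of `f`, with the convention `LM 0 = none`. -/
def IsLMopt (π : O) (mo : MonomialOrder (Fin n)) (f : MvPowerSeries (Fin n) O) :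
    Option (TMon n) → Prop
  | none => f = 0
  | some m => IsLM π mo f m

/-- All coefficients of `f` are divisible by `π^N`, i.e. `val f ≥ N`. -/
def DvdAll (π : O) (N : ℕ) (f : MvPowerSeries (Fin n) O) : Prop :=
  ∀ i, π ^ N ∣ MvPowerSeries.coeff i f

/-- The Gauss valuation of `f` is exactly `N`. -/
def ValEq (π : O) (f : MvPowerSeries (Fin n) O) (N : ℕ) : Prop :=
  DvdAll π N f ∧ ¬ DvdAll π (N + 1) f

/-- `G` is a Gröbner basis of the ideal `I` of the (integral) Tate algebra. -/
def IsGB (π : O) (mo : MonomialOrder (Fin n)) (G : Set (TateAlgebra n O π))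
    (I : Ideal (TateAlgebra n O π)) : Prop :=
  (∀ g ∈ G, g ∈ I) ∧
    ∀ f ∈ I, (f : MvPowerSeries (Fin n) O) ≠ 0 → ∀ mf,
      IsLM π mo (f : MvPowerSeries (Fin n) O) mf →
        ∃ g ∈ G, ∃ mg, IsLM π mo (g : MvPowerSeries (Fin n) O) mg ∧ monDvd mg mf

/-- The module `M = {(u,v) : u f - v ∈ I₀}`. -/
def SigMod {π : O} (I0 : Ideal (TateAlgebra n O π)) (f : TateAlgebra n O π) :
    Set (TateAlgebra n O π × TateAlgebra n O π) :=
  {p | p.1 * f - p.2 ∈ I0}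

/-- `p = (u₁,v₁)` is top-reducible by `q = (u₂,v₂)`. -/
def TopRed (π : O) (mo : MonomialOrder (Fin n))
    (p q : TateAlgebra n O π × TateAlgebra n O π) : Prop :=
  (q.2 = 0 ∧ ∃ mu mq, IsLM π mo (p.1 : MvPowerSeries (Fin n) O) mu ∧
      IsLM π mo (q.1 : MvPowerSeries (Fin n) O) mq ∧ monDvd mq mu)
  ∨ (p.2 ≠ 0 ∧ q.2 ≠ 0 ∧
      ∃ m1 m2, IsLM π mo (p.2 : MvPowerSeries (Fin n) O) m1 ∧
        IsLM π mo (q.2 : MvPowerSeries (Fin n) O) m2 ∧ monDvd m2 m1 ∧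
        ∃ s1 s2, IsLMopt π mo (p.1 : MvPowerSeries (Fin n) O) s1 ∧
          IsLMopt π mo (q.1 : MvPowerSeries (Fin n) O) s2 ∧
          optLE mo (optMul (monDiv m1 m2) s2) s1)

/-- `G` is a strong Gröbner basis of the module `M = SigMod I0 f`. -/
def IsSGB (π : O) (mo : MonomialOrder (Fin n)) (I0 : Ideal (TateAlgebra n O π))
    (f : TateAlgebra n O π) (G : Set (TateAlgebra n O π × TateAlgebra n O π)) : Prop :=
  G.Finite ∧ G ⊆ SigMod I0 f ∧
    ∀ p ∈ SigMod I0 f, p ≠ 0 → ∃ q ∈ G, TopRed π mo p q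

/-- `p` is covered by `q`. -/
def Covers (π : O) (mo : MonomialOrder (Fin n))
    (q p : TateAlgebra n O π × TateAlgebra n O π) : Prop :=
  ∃ mu mq, IsLM π mo (p.1 : MvPowerSeries (Fin n) O) mu ∧
    IsLM π mo (q.1 : MvPowerSeries (Fin n) O) mq ∧ monDvd mq mu ∧
    ∃ sv sp, IsLMopt π mo (q.2 : MvPowerSeries (Fin n) O) sv ∧
      IsLMopt π mo (p.2 : MvPowerSeries (Fin n) O) sp ∧
      optLT mo (optMul (monDiv mu mq) sv) sp

def CoveredBy (π : O) (mo : MonomialOrder (Fin n))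
    (p : TateAlgebra n O π × TateAlgebra n O π)
    (G : Set (TateAlgebra n O π × TateAlgebra n O π)) : Prop :=
  ∃ q ∈ G, Covers π mo q p

/-- The Tate series `π^a X^i`, as an element of the Tate algebra. -/
noncomputable def monTA (π : O) (m : TMon n) : TateAlgebra n O π :=
  ⟨MvPowerSeries.monomial m.2 (π ^ m.1), by
    intro N
    apply Set.Finite.subset (Set.finite_singleton m.2)
    intro i hi
    by_contra h
    rw [Set.mem_singleton_iff] at h
    apply hi
    rw [MvPowerSeries.coeff_monomial, if_neg h]
    exact Dvd.intro 0 (by simp)⟩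

noncomputable def smulPair (π : O) (m : TMon n) (p : TateAlgebra n O π × TateAlgebra n O π) :
    TateAlgebra n O π × TateAlgebra n O π :=
  (monTA π m * p.1, monTA π m * p.2)

/-- `r` is the J-pair of `(p, q)` (with `p` carrying the larger signature part). -/
def IsJPair (π : O) (mo : MonomialOrder (Fin n))
    (p q r : TateAlgebra n O π × TateAlgebra n O π) : Prop :=
  ∃ m1 m2, IsLM π mo (p.2 : MvPowerSeries (Fin n) O) m1 ∧
    IsLM π mo (q.2 : MvPowerSeries (Fin n) O) m2 ∧
    (∃ s1 s2, IsLMopt π mo (p.1 : MvPowerSeries (Fin n) O) s1 ∧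
      IsLMopt π mo (q.1 : MvPowerSeries (Fin n) O) s2 ∧
      optLT mo (optMul (monDiv (monLcm m1 m2) m2) s2)
        (optMul (monDiv (monLcm m1 m2) m1) s1)) ∧
    r = smulPair π (monDiv (monLcm m1 m2) m1) p

section Residue

variable {k : Type*} [Field k]

/-- `P = ρ(f)`, the reduction mod `π` of `π^{-val f} f`. -/
def IsRho (π : O) (φ : O →+* k) (f : MvPowerSeries (Fin n) O)
    (P : MvPolynomial (Fin n) k) : Prop :=
  ∃ (N : ℕ) (g : MvPowerSeries (Fin n) O), f = (π ^ N) • g ∧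
    (∃ i, ¬ π ∣ MvPowerSeries.coeff i g) ∧
    ∀ i, MvPolynomial.coeff i P = φ (MvPowerSeries.coeff i g)

def rhoSet (π : O) (φ : O →+* k) (S : Set (TateAlgebra n O π)) :
    Set (MvPolynomial (Fin n) k) :=
  {P | ∃ f ∈ S, IsRho π φ (f : MvPowerSeries (Fin n) O) P}

/-- `Ī_N`: the image in `k[X]` of `π^{-N} (I ∩ π^N K{X}°)`. -/
def BarIdeal (π : O) (φ : O →+* k) (I : Ideal (TateAlgebra n O π)) (N : ℕ) :
    Set (MvPolynomial (Fin n) k) :=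
  {P | ∃ f ∈ I, ∃ g : MvPowerSeries (Fin n) O, (f : MvPowerSeries (Fin n) O) = (π ^ N) • g ∧
    ∀ i, MvPolynomial.coeff i P = φ (MvPowerSeries.coeff i g)}

/-- `d` is the leading exponent of the polynomial `P` for the monomial order `mo`. -/
def IsPolyLM (mo : MonomialOrder (Fin n)) (P : MvPolynomial (Fin n) k)
    (d : Fin n →₀ ℕ) : Prop :=
  MvPolynomial.coeff d P ≠ 0 ∧ ∀ e, MvPolynomial.coeff e P ≠ 0 → mo.toSyn e ≤ mo.toSyn d

/-- `G` is a Gröbner basis of the set (ideal) `J` of polynomials over the residue field. -/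
def IsPolyGB (mo : MonomialOrder (Fin n)) (G : Set (MvPolynomial (Fin n) k))
    (J : Set (MvPolynomial (Fin n) k)) : Prop :=
  G ⊆ J ∧ ∀ P ∈ J, P ≠ 0 → ∀ d, IsPolyLM mo P d →
    ∃ Q ∈ G, ∃ e, IsPolyLM mo Q e ∧ e ≤ d

end Residue

end TateStmt


open TateStmt MvPowerSeries

variable {n : ℕ} {O k : Type*} [CommRing O] [IsDomain O] [IsDiscreteValuationRing O] [Field k]

section Helpers

variable {O : Type*} [CommRing O] [IsDomain O] [IsDiscreteValuationRing O]

lemma val_exists {π : O} (hπ : Irreducible π) {c : O} (hc : c ≠ 0) :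
    ∃ b : ℕ, π ^ b ∣ c ∧ ¬ π ^ (b + 1) ∣ c := by
  obtain ⟨b, u, rfl⟩ := IsDiscreteValuationRing.eq_unit_mul_pow_irreducible hc hπ
  refine ⟨b, dvd_mul_left _ _, fun hd => ?_⟩
  have h1 : π ^ b * π ∣ π ^ b * 1 := by
    rw [mul_one, ← pow_succ]
    have := hd.mul_left (↑u⁻¹ : O)
    rwa [← mul_assoc, Units.inv_mul, one_mul] at this
  have := (mul_dvd_mul_iff_left (pow_ne_zero b hπ.ne_zero)).mp h1
  exact hπ.not_isUnit (isUnit_of_dvd_one this)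

omit [IsDiscreteValuationRing O] in
lemma not_dvd_succ {π : O} (hπ : Irreducible π) {N : ℕ} {c : O} (h : ¬ π ∣ c) :
    ¬ π ^ (N + 1) ∣ π ^ N * c := by
  intro hd
  rw [pow_succ] at hd
  exact h ((mul_dvd_mul_iff_left (pow_ne_zero N hπ.ne_zero)).mp hd)

end Helpers

/-- if `G ⊆ I ⊆ K{X}°` is such that for every `N ≥ 0` the reductions
`ρ(G_{≤N})` of the elements of `G` of valuation at most `N` form a Gröbner basis of `Ī_N`
in `k[X]`, then `G` is a Gröbner basis of `I` for the valuation-first term order. -/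
theorem statement_15 (π : O) (hπ : Irreducible π) (mo : MonomialOrder (Fin n))
    (φ : O →+* k) (hsurj : Function.Surjective φ)
    (hker : RingHom.ker φ = Ideal.span {π})
    (I : Ideal (TateAlgebra n O π)) (G : Set (TateAlgebra n O π))
    (hGI : ∀ g ∈ G, g ∈ I)
    (hGB : ∀ N : ℕ, IsPolyGB mo
      (rhoSet π φ {g ∈ G | ∃ M ≤ N, ValEq π (g : MvPowerSeries (Fin n) O) M})
      (BarIdeal π φ I N)) :
    IsGB π mo G I := by
  classical
  refine ⟨hGI, ?_⟩
  intro f hfI hf0 mf hmf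
  obtain ⟨⟨hdvd, hndvd⟩, hmax⟩ := hmf
  -- Step 1: all coefficients of f are divisible by π ^ mf.1
  have hall : ∀ j, π ^ mf.1 ∣ MvPowerSeries.coeff j (f : MvPowerSeries (Fin n) O) := by
    intro j
    by_cases hj : MvPowerSeries.coeff j (f : MvPowerSeries (Fin n) O) = 0
    · rw [hj]; exact dvd_zero _
    · obtain ⟨b, hb1, hb2⟩ := val_exists hπ hj
      rcases hmax (b, j) ⟨hb1, hb2⟩ with h | h | ⟨h, _⟩
      · rw [← h]; exact hb1
      · exact (pow_dvd_pow π (le_of_lt h)).trans hb1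
      · rw [← h]; exact hb1
  -- Step 2: divide f by π ^ mf.1
  let g : MvPowerSeries (Fin n) O := fun j => (hall j).choose
  have hg : ∀ j, MvPowerSeries.coeff j (f : MvPowerSeries (Fin n) O) = π ^ mf.1 * g j :=
    fun j => (hall j).choose_spec
  have hgc : ∀ j, MvPowerSeries.coeff j g = g j := fun j => rfl
  have hfg : (f : MvPowerSeries (Fin n) O) = (π ^ mf.1) • g := by
    ext j
    rw [MvPowerSeries.coeff_smul, hgc, hg]
  have hphi : ∀ c : O, φ c = 0 ↔ π ∣ c := by
    intro c
    rw [← Ideal.mem_span_singleton, ← hker]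
    exact Iff.rfl
  have hgi : ¬ π ∣ g mf.2 := by
    intro hd
    apply hndvd
    rw [hg mf.2, pow_succ]
    exact mul_dvd_mul_left _ hd
  -- Step 3: build the polynomial P = ρ(f)
  have hfin := f.2 (mf.1 + 1)
  let P : MvPolynomial (Fin n) k :=
    ∑ j ∈ hfin.toFinset, MvPolynomial.monomial j (φ (g j))
  have hPcoeff : ∀ j, MvPolynomial.coeff j P = φ (MvPowerSeries.coeff j g) := by
    intro j
    rw [hgc]
    by_cases hjS : j ∈ hfin.toFinset
    · rw [MvPolynomial.coeff_sum, Finset.sum_eq_single j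
        (fun b _ hb => by rw [MvPolynomial.coeff_monomial, if_neg hb])
        (fun hj => absurd hjS hj), MvPolynomial.coeff_monomial, if_pos rfl]
    · have hjd : π ^ (mf.1 + 1) ∣ MvPowerSeries.coeff j (f : MvPowerSeries (Fin n) O) := by
        by_contra hc
        exact hjS (hfin.mem_toFinset.mpr hc)
      have hπj : π ∣ g j := by
        rw [hg j, pow_succ] at hjd
        exact (mul_dvd_mul_iff_left (pow_ne_zero mf.1 hπ.ne_zero)).mp hjd
      rw [MvPolynomial.coeff_sum, Finset.sum_eq_zero
        (fun b hb => by
          rw [MvPolynomial.coeff_monomial]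
          rw [if_neg (fun (hbj : b = j) => hjS (hbj ▸ hb))]), (hphi _).mpr hπj]
  have hPmem : P ∈ BarIdeal π φ I mf.1 := ⟨f, hfI, g, hfg, hPcoeff⟩
  have hPi : MvPolynomial.coeff mf.2 P ≠ 0 := by
    rw [hPcoeff, hgc]
    intro h
    exact hgi ((hphi _).mp h)
  have hPne : P ≠ 0 := fun h => hPi (by rw [h]; simp)
  have hPLM : IsPolyLM mo P mf.2 := by
    refine ⟨hPi, fun e he => ?_⟩
    have hπe : ¬ π ∣ g e := by
      intro hd
      apply he
      rw [hPcoeff e, hgc]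
      exact (hphi _).mpr hd
    have hterm : IsTerm π (f : MvPowerSeries (Fin n) O) (mf.1, e) := by
      refine ⟨hall e, ?_⟩
      rw [hg e]
      exact not_dvd_succ hπ hπe
    rcases hmax (mf.1, e) hterm with h | h | ⟨_, h⟩
    · rw [show e = mf.2 from congrArg Prod.snd h]
    · exact absurd h (lt_irrefl _)
    · exact le_of_lt h
  -- Step 4: apply the residue Gröbner basis hypothesis
  obtain ⟨Q, hQ, e, hQLM, he⟩ := (hGB mf.1).2 P hPmem hPne mf.2 hPLM
  obtain ⟨g0, ⟨hg0G, M, hM, hvalM⟩, N', h, hgh, ⟨i0, hi0⟩, hcoe⟩ := hQ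
  -- N' ≤ M ≤ mf.1
  have hDN' : DvdAll π N' (g0 : MvPowerSeries (Fin n) O) := by
    intro j
    rw [hgh, MvPowerSeries.coeff_smul]
    exact Dvd.intro _ rfl
  have hN'M : N' ≤ M := by
    by_contra hc
    push_neg at hc
    exact hvalM.2 (fun j => (pow_dvd_pow π hc).trans (hDN' j))
  -- leading monomial of g0 is (N', e)
  have hQe : ∀ j, MvPolynomial.coeff j Q ≠ 0 ↔ ¬ π ∣ MvPowerSeries.coeff j h := by
    intro j
    rw [hcoe j]
    constructor
    · intro h1 h2
      exact h1 ((hphi _).mpr h2)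
    · intro h1 h2
      exact h1 ((hphi _).mp h2)
  have hge : ¬ π ∣ MvPowerSeries.coeff e h := (hQe e).mp hQLM.1
  have hLMg0 : IsLM π mo (g0 : MvPowerSeries (Fin n) O) (N', e) := by
    constructor
    · constructor
      · exact hDN' e
      · rw [hgh, MvPowerSeries.coeff_smul]
        exact not_dvd_succ hπ hge
    · rintro ⟨b, j⟩ ⟨hb1, hb2⟩
      have hbN' : N' ≤ b := by
        by_contra hc
        push_neg at hc
        exact hb2 ((pow_dvd_pow π hc).trans (hDN' j))
      rcases lt_or_eq_of_le hbN' with hlt | heq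
      · exact Or.inr (Or.inl hlt)
      · subst heq
        have hπj : ¬ π ∣ MvPowerSeries.coeff j h := by
          intro hd
          apply hb2
          rw [hgh, MvPowerSeries.coeff_smul, pow_succ]
          exact mul_dvd_mul_left _ hd
        have hje : mo.toSyn j ≤ mo.toSyn e := hQLM.2 j ((hQe j).mpr hπj)
        rcases lt_or_eq_of_le hje with hlt | heq2
        · exact Or.inr (Or.inr ⟨rfl, hlt⟩)
        · have : j = e := mo.toSyn.injective heq2
          subst this
          exact Or.inl rfl
  exact ⟨g0, hg0G, (N', e), hLMg0, hN'M.trans hM, he⟩
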